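/- For the subgradient method x^{k+1} = x^k - h_k ∇f(x^k) with Polyak stepsize h_k = (f(x^k) - f*)/‖∇f(x^k)‖², each iterate satisfies ‖x^{k+1} - x*‖² ≤ ‖x^k - x*‖² - (f(x^k) - f*)²/‖∇f(x^k)‖² for any minimizer x*. -/

import Mathlib

/-- One step of the subgradient method with Polyak stepsize
`h = (f x - f*)/‖g‖²` decreases the squared distance to any minimizer `x*`
by at least `(f x - f*)²/‖g‖²`. Here `g` is any nonzero subgradient of the
convex function `f` at `x`. -/
theorem polyak_step_decrease {n : ℕ} (f : EuclideanSpace ℝ (Fin n) → ℝ)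
    (x xstar g : EuclideanSpace ℝ (Fin n)) (fstar : ℝ)
    (hsub : ∀ y, f y ≥ f x + (inner ℝ g (y - x) : ℝ))
    (hg : g ≠ 0)
    (hmin : f xstar = fstar) (hlb : ∀ y, fstar ≤ f y) :
    ‖x - ((f x - fstar) / ‖g‖ ^ 2) • g - xstar‖ ^ 2
      ≤ ‖x - xstar‖ ^ 2 - (f x - fstar) ^ 2 / ‖g‖ ^ 2 := by
  set h : ℝ := (f x - fstar) / ‖g‖ ^ 2 with hh
  have hgn : (0:ℝ) < ‖g‖ ^ 2 := by
    have := norm_pos_iff.mpr hg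
    positivity
  have hip : (f x - fstar) ≤ (inner ℝ g (x - xstar) : ℝ) := by
    have := hsub xstar
    have h2 : (inner ℝ g (xstar - x) : ℝ) = -(inner ℝ g (x - xstar) : ℝ) := by
      rw [← neg_sub x xstar, inner_neg_right]
    rw [hmin] at this
    rw [h2] at this
    linarith
  have key : x - h • g - xstar = (x - xstar) - h • g := by
    abel
  rw [key]
  have expand : ‖(x - xstar) - h • g‖ ^ 2
      = ‖x - xstar‖ ^ 2 - 2 * h * (inner ℝ g (x - xstar) : ℝ) + h ^ 2 * ‖g‖ ^ 2 := by
    rw [norm_sub_sq_real, real_inner_smul_right, norm_smul, real_inner_comm]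
    simp [mul_pow, abs_sq, sq_abs]
    ring
  rw [expand]
  have hnonneg : 0 ≤ f x - fstar := by linarith [hlb x]
  have hpos : 0 ≤ h := div_nonneg hnonneg (le_of_lt hgn)
  have h1 : 2 * h * (f x - fstar) ≤ 2 * h * (inner ℝ g (x - xstar) : ℝ) := by
    apply mul_le_mul_of_nonneg_left hip; positivity
  have h2 : h ^ 2 * ‖g‖ ^ 2 = h * (f x - fstar) := by
    rw [hh]; field_simp
  have h3 : (f x - fstar) ^ 2 / ‖g‖ ^ 2 = h * (f x - fstar) := by
    rw [hh]; field_simp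
  linarith
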